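/- (Equivalence Dirichlet → Robin.) Assume α₂ > α₃ and A > B. Let μ₁ > z₀ be the unique solution of the reduced Dirichlet system, i.e. Q(μ₁) = V(μ₂) where μ₂ ≥ 0 satisfies erf(μ₂·√(α₁/α₂)) = H(μ₁). Let A∞ > A be such that (A−B)/((A∞−A)·erf(μ₂·√(α₁/α₃))) > ((B−C)/(A∞−B))·√(k₂·c₂/(k₃·c₃))·(1/erf(z₀·√(α₁/α₂))), and define h₀ := (k₃/√(α₃·π))·(A−B)/((A∞−A)·erf(μ₂·√(α₁/α₃))). Then h₀ > h₂ and Q(μ₁) = T(μ₂), where T is the Robin function built from these h₀ and A∞; consequently μ₁ coincides with the unique solution ξ₁ > z₀ of the reduced Robin system with data h₀, A∞, and μ₂ = ξ₂. -/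

import Mathlib

noncomputable section

/-- The error function `erf x = (2/√π) ∫₀ˣ exp(−s²) ds`. -/
def erf (x : ℝ) : ℝ := (2 / Real.sqrt Real.pi) * ∫ s in (0:ℝ)..x, Real.exp (-(s^2))

/-- The complementary error function. -/
def erfc (x : ℝ) : ℝ := 1 - erf x

/-- Physical data of the three-phase Stefan problem: positive thermal conductivities,
specific heats, mass density, latent heats, and temperatures `B > C > D`. -/
structure Params where
  k₁ : ℝ
  k₂ : ℝ
  k₃ : ℝ
  c₁ : ℝ
  c₂ : ℝ
  c₃ : ℝ
  ρ : ℝ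
  ℓ₁ : ℝ
  ℓ₂ : ℝ
  B : ℝ
  C : ℝ
  D : ℝ
  hk₁ : 0 < k₁
  hk₂ : 0 < k₂
  hk₃ : 0 < k₃
  hc₁ : 0 < c₁
  hc₂ : 0 < c₂
  hc₃ : 0 < c₃
  hρ : 0 < ρ
  hℓ₁ : 0 < ℓ₁
  hℓ₂ : 0 < ℓ₂
  hBC : C < B
  hCD : D < C

namespace Params

/-- Thermal diffusivity of phase 1. -/
def α₁ (p : Params) : ℝ := p.k₁ / (p.ρ * p.c₁)

/-- Thermal diffusivity of phase 2. -/
def α₂ (p : Params) : ℝ := p.k₂ / (p.ρ * p.c₂)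

/-- Thermal diffusivity of phase 3. -/
def α₃ (p : Params) : ℝ := p.k₃ / (p.ρ * p.c₃)

/-- Stefan number `Ste₁ = c₁(C−D)/ℓ₁`. -/
def Ste₁ (p : Params) : ℝ := p.c₁ * (p.C - p.D) / p.ℓ₁

/-- Stefan number `Ste₂ = c₂(B−C)/ℓ₂`. -/
def Ste₂ (p : Params) : ℝ := p.c₂ * (p.B - p.C) / p.ℓ₂

/-- `φ(z) = z + (Ste₁/√π) exp(−z²)/erfc(z)`. -/
def φ (p : Params) (z : ℝ) : ℝ :=
  z + (p.Ste₁ / Real.sqrt Real.pi) * Real.exp (-(z^2)) / erfc z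

/-- `H(z) = erf(z√(α₁/α₂)) − (Ste₂/√π)(ℓ₂/ℓ₁)√(k₂c₁/(k₁c₂)) exp(−z²α₁/α₂)/φ(z)`. -/
def H (p : Params) (z : ℝ) : ℝ :=
  erf (z * Real.sqrt (p.α₁ / p.α₂)) -
    (p.Ste₂ / Real.sqrt Real.pi) * (p.ℓ₂ / p.ℓ₁) *
      Real.sqrt (p.k₂ * p.c₁ / (p.k₁ * p.c₂)) *
      (Real.exp (-(z^2) * (p.α₁ / p.α₂)) / p.φ z)

/-- `Q(z) = (ℓ₁/ℓ₂) φ(z) exp(z² α₁/α₂)`. -/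
def Q (p : Params) (z : ℝ) : ℝ :=
  (p.ℓ₁ / p.ℓ₂) * p.φ z * Real.exp (z^2 * (p.α₁ / p.α₂))

/-- The function `T` arising from the Robin (convective) boundary condition with
heat-transfer coefficient `h₀` and bulk temperature `Ainf`. -/
def T (p : Params) (h₀ Ainf : ℝ) (z : ℝ) : ℝ :=
  (p.Ste₂ / (Real.sqrt Real.pi * p.c₂)) * ((Ainf - p.B) / (p.B - p.C)) *
    Real.sqrt (p.k₃ * p.c₁ * p.c₃ / p.k₁) *
    (Real.exp (-(z^2) * p.α₁ * (1 / p.α₃ - 1 / p.α₂)) /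
      (p.k₃ / (h₀ * Real.sqrt (Real.pi * p.α₃)) + erf (z * Real.sqrt (p.α₁ / p.α₃)))) -
  z * Real.exp (z^2 * (p.α₁ / p.α₂))

/-- The function `V` arising from the Dirichlet boundary condition with temperature `A`. -/
def V (p : Params) (A : ℝ) (z : ℝ) : ℝ :=
  ((A - p.B) / p.ℓ₂) * Real.sqrt (p.c₁ * p.c₃ * p.k₃ / (Real.pi * p.k₁)) *
    (Real.exp (-(z^2) * (p.α₁ / p.α₃ - p.α₁ / p.α₂)) / erf (z * Real.sqrt (p.α₁ / p.α₃))) -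
  z * Real.exp (z^2 * (p.α₁ / p.α₂))

/-- The function `P` arising from the Neumann boundary condition with flux coefficient `q₀`. -/
def P (p : Params) (q₀ : ℝ) (z : ℝ) : ℝ :=
  Real.exp (z^2 * (p.α₁ / p.α₂)) *
    (-z + (q₀ / p.ℓ₂) * Real.sqrt (p.c₁ / (p.ρ * p.k₁)) * Real.exp (-(z^2) * (p.α₁ / p.α₃)))

/-- Critical heat-transfer coefficient `h₂`. -/
def h2 (p : Params) (Ainf z₀ : ℝ) : ℝ :=
  ((p.B - p.C) / (Ainf - p.B)) *
    Real.sqrt (p.k₂ * p.k₃ * p.c₂ / (Real.pi * p.c₃ * p.α₃)) *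
    (1 / erf (z₀ * Real.sqrt (p.α₁ / p.α₂)))

/-- Critical heat-flux coefficient `q₂`. -/
def q2 (p : Params) (z₀ : ℝ) : ℝ :=
  p.k₂ * (p.B - p.C) / (Real.sqrt (p.α₂ * Real.pi) * erf (z₀ * Real.sqrt (p.α₁ / p.α₂)))

end Params


/-! ### Auxiliary lemmas -/

open MeasureTheory Set in
lemma gaussInt : Integrable (fun s : ℝ => Real.exp (-(s^2))) := by
  simpa using integrable_exp_neg_mul_sq (one_pos)

lemma sqrtPiPos : 0 < Real.sqrt Real.pi := Real.sqrt_pos.2 Real.pi_pos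

lemma erf_zero' : erf 0 = 0 := by simp [erf]

open MeasureTheory Set in
lemma erf_strictMono : StrictMono erf := by
  intro x y hxy
  have hi : ∀ a b : ℝ, IntervalIntegrable (fun s => Real.exp (-(s^2))) volume a b :=
    fun a b => gaussInt.intervalIntegrable
  have h : (0:ℝ) < ∫ s in x..y, Real.exp (-(s^2)) :=
    intervalIntegral.intervalIntegral_pos_of_pos (hi x y) (fun s => Real.exp_pos _) hxy
  have hsplit : (∫ s in (0:ℝ)..x, Real.exp (-(s^2))) + ∫ s in x..y, Real.exp (-(s^2))
      = ∫ s in (0:ℝ)..y, Real.exp (-(s^2)) :=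
    intervalIntegral.integral_add_adjacent_intervals (hi 0 x) (hi x y)
  have : (∫ s in (0:ℝ)..x, Real.exp (-(s^2))) < ∫ s in (0:ℝ)..y, Real.exp (-(s^2)) := by
    linarith
  exact mul_lt_mul_of_pos_left this (by positivity)

lemma erf_pos' {x : ℝ} (hx : 0 < x) : 0 < erf x := by
  have := erf_strictMono hx; rwa [erf_zero'] at this

lemma erf_nonneg' {x : ℝ} (hx : 0 ≤ x) : 0 ≤ erf x := by
  rcases hx.eq_or_lt with h | h
  · simp [← h, erf_zero']
  · exact (erf_pos' h).le

open MeasureTheory Set in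
lemma gauss_Ioi : ∫ s in Ioi (0:ℝ), Real.exp (-(s^2)) = Real.sqrt Real.pi / 2 := by
  simpa using integral_gaussian_Ioi 1

open MeasureTheory Set in
lemma erfc_eq_integral {x : ℝ} (hx : 0 ≤ x) :
    erfc x = (2 / Real.sqrt Real.pi) * ∫ s in Ioi x, Real.exp (-(s^2)) := by
  have hsplit : (∫ s in Ioc (0:ℝ) x, Real.exp (-(s^2))) + ∫ s in Ioi x, Real.exp (-(s^2))
      = ∫ s in Ioi (0:ℝ), Real.exp (-(s^2)) := by
    rw [← setIntegral_union (Ioc_disjoint_Ioi le_rfl) measurableSet_Ioi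
      (gaussInt.integrableOn) (gaussInt.integrableOn), Ioc_union_Ioi_eq_Ioi hx]
  have h1 : erf x = (2 / Real.sqrt Real.pi) * ∫ s in Ioc (0:ℝ) x, Real.exp (-(s^2)) := by
    rw [erf, intervalIntegral.integral_of_le hx]
  rw [gauss_Ioi] at hsplit
  have h2 : (∫ s in Ioi x, Real.exp (-(s^2)))
      = Real.sqrt Real.pi / 2 - ∫ s in Ioc (0:ℝ) x, Real.exp (-(s^2)) := by linarith
  rw [erfc, h1, h2]
  have := sqrtPiPos.ne'
  field_simp

open MeasureTheory Set in
lemma Ioi_int_pos (x : ℝ) : 0 < ∫ s in Ioi x, Real.exp (-(s^2)) := by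
  rw [setIntegral_pos_iff_support_of_nonneg_ae
    (Filter.Eventually.of_forall (fun s => (Real.exp_pos _).le)) gaussInt.integrableOn]
  have : (Function.support fun s : ℝ => Real.exp (-(s^2))) = univ := by
    ext s; simp [Function.support, (Real.exp_pos _).ne']
  rw [this, univ_inter]
  simp [Real.volume_Ioi]

lemma erfc_pos' {x : ℝ} (hx : 0 ≤ x) : 0 < erfc x := by
  rw [erfc_eq_integral hx]
  have := Ioi_int_pos x
  positivity

open MeasureTheory Set in
lemma shift_int (x d : ℝ) :
    (∫ s in Ioi (x + d), Real.exp (-(s^2))) = ∫ u in Ioi x, Real.exp (-((u + d)^2)) := by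
  have hemb : MeasurableEmbedding (fun u : ℝ => u + d) :=
    (Homeomorph.addRight d).measurableEmbedding
  have hmap : Measure.map (fun u : ℝ => u + d) volume = volume :=
    (measurePreserving_add_right volume d).map_eq
  have h := hemb.setIntegral_map (g := fun s => Real.exp (-(s^2))) (s := Ioi (x+d)) (μ := volume)
  have hpre : (fun u : ℝ => u + d) ⁻¹' Ioi (x + d) = Ioi x := by ext u; simp
  rw [hmap, hpre] at h
  exact h

open MeasureTheory Set in
lemma key_ineq {x y : ℝ} (hxy : x ≤ y) :
    (∫ s in Ioi y, Real.exp (-(s^2))) ≤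
      Real.exp (x^2 - y^2) * ∫ s in Ioi x, Real.exp (-(s^2)) := by
  obtain ⟨d, hd, rfl⟩ : ∃ d, 0 ≤ d ∧ y = x + d := ⟨y - x, by linarith, by ring⟩
  rw [shift_int, ← MeasureTheory.integral_const_mul]
  apply setIntegral_mono_on
  · exact (gaussInt.comp_add_right d).integrableOn
  · exact (gaussInt.const_mul _).integrableOn
  · exact measurableSet_Ioi
  · intro u hu
    simp only [mem_Ioi] at hu
    rw [← Real.exp_add, Real.exp_le_exp]
    nlinarith

open MeasureTheory Set in
lemma ratio_mono {x y : ℝ} (hx : 0 ≤ x) (hxy : x ≤ y) :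
    Real.exp (-(x^2)) / erfc x ≤ Real.exp (-(y^2)) / erfc y := by
  have hy : 0 ≤ y := hx.trans hxy
  have hex : 0 < erfc x := erfc_pos' hx
  have hey : 0 < erfc y := erfc_pos' hy
  rw [div_le_div_iff₀ hex hey]
  rw [erfc_eq_integral hx, erfc_eq_integral hy]
  have hkey := key_ineq hxy
  have h2 : Real.exp (-(x^2)) * (∫ s in Ioi y, Real.exp (-(s^2)))
      ≤ Real.exp (-(y^2)) * ∫ s in Ioi x, Real.exp (-(s^2)) := by
    calc Real.exp (-(x^2)) * (∫ s in Ioi y, Real.exp (-(s^2)))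
        ≤ Real.exp (-(x^2)) * (Real.exp (x^2 - y^2) * ∫ s in Ioi x, Real.exp (-(s^2))) :=
          mul_le_mul_of_nonneg_left hkey (Real.exp_pos _).le
      _ = Real.exp (-(y^2)) * ∫ s in Ioi x, Real.exp (-(s^2)) := by
          rw [← mul_assoc, ← Real.exp_add]; ring_nf
  calc Real.exp (-(x^2)) * (2 / Real.sqrt Real.pi * ∫ s in Ioi y, Real.exp (-(s^2)))
      = (2 / Real.sqrt Real.pi) * (Real.exp (-(x^2)) * ∫ s in Ioi y, Real.exp (-(s^2))) := by ring
    _ ≤ (2 / Real.sqrt Real.pi) * (Real.exp (-(y^2)) * ∫ s in Ioi x, Real.exp (-(s^2))) :=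
        mul_le_mul_of_nonneg_left h2 (by positivity)
    _ = Real.exp (-(y^2)) * (2 / Real.sqrt Real.pi * ∫ s in Ioi x, Real.exp (-(s^2))) := by ring

namespace Params

variable (p : Params)

lemma hα₁ : 0 < p.α₁ := div_pos p.hk₁ (mul_pos p.hρ p.hc₁)
lemma hα₂ : 0 < p.α₂ := div_pos p.hk₂ (mul_pos p.hρ p.hc₂)
lemma hα₃ : 0 < p.α₃ := div_pos p.hk₃ (mul_pos p.hρ p.hc₃)
lemma hSte₁ : 0 < p.Ste₁ := div_pos (mul_pos p.hc₁ (by linarith [p.hCD])) p.hℓ₁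
lemma hSte₂ : 0 < p.Ste₂ := div_pos (mul_pos p.hc₂ (by linarith [p.hBC])) p.hℓ₂

lemma φ_pos {z : ℝ} (hz : 0 ≤ z) : 0 < p.φ z := by
  unfold φ
  have h1 : 0 < p.Ste₁ / Real.sqrt Real.pi * Real.exp (-(z^2)) / erfc z := by
    have := p.hSte₁; have := sqrtPiPos; have := erfc_pos' hz
    positivity
  linarith

lemma φ_mono {x y : ℝ} (hx : 0 ≤ x) (hxy : x ≤ y) : p.φ x ≤ p.φ y := by
  unfold φ
  have h := ratio_mono hx hxy
  have hc : 0 ≤ p.Ste₁ / Real.sqrt Real.pi := by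
    have := p.hSte₁; have := sqrtPiPos; positivity
  have := mul_le_mul_of_nonneg_left h hc
  rw [mul_div_assoc, mul_div_assoc]
  linarith

lemma φ_strictMono {x y : ℝ} (hx : 0 ≤ x) (hxy : x < y) : p.φ x < p.φ y := by
  unfold φ
  have h := ratio_mono hx hxy.le
  have hc : 0 ≤ p.Ste₁ / Real.sqrt Real.pi := by
    have := p.hSte₁; have := sqrtPiPos; positivity
  have := mul_le_mul_of_nonneg_left h hc
  rw [mul_div_assoc, mul_div_assoc]
  linarith

lemma Q_strictMono {x y : ℝ} (hx : 0 ≤ x) (hxy : x < y) : p.Q x < p.Q y := by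
  unfold Q
  have ha : 0 < p.α₁ / p.α₂ := div_pos p.hα₁ p.hα₂
  have hφx := p.φ_pos hx
  have hφ := p.φ_strictMono hx hxy
  have hxy2 : x^2 ≤ y^2 := by nlinarith
  have hexp : Real.exp (x^2 * (p.α₁ / p.α₂)) ≤ Real.exp (y^2 * (p.α₁ / p.α₂)) :=
    Real.exp_le_exp.2 (mul_le_mul_of_nonneg_right hxy2 ha.le)
  have hl : 0 < p.ℓ₁ / p.ℓ₂ := div_pos p.hℓ₁ p.hℓ₂
  have h1 : p.φ x * Real.exp (x^2 * (p.α₁ / p.α₂)) < p.φ y * Real.exp (y^2 * (p.α₁ / p.α₂)) := by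
    calc p.φ x * Real.exp (x^2 * (p.α₁ / p.α₂))
        ≤ p.φ x * Real.exp (y^2 * (p.α₁ / p.α₂)) :=
          mul_le_mul_of_nonneg_left hexp hφx.le
      _ < p.φ y * Real.exp (y^2 * (p.α₁ / p.α₂)) :=
          mul_lt_mul_of_pos_right hφ (Real.exp_pos _)
  rw [mul_assoc, mul_assoc]
  exact mul_lt_mul_of_pos_left h1 hl

lemma H_strictMono {x y : ℝ} (hx : 0 ≤ x) (hxy : x < y) : p.H x < p.H y := by
  unfold H
  have ha : 0 < p.α₁ / p.α₂ := div_pos p.hα₁ p.hα₂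
  have hsa : 0 < Real.sqrt (p.α₁ / p.α₂) := Real.sqrt_pos.2 ha
  have herf : erf (x * Real.sqrt (p.α₁ / p.α₂)) < erf (y * Real.sqrt (p.α₁ / p.α₂)) :=
    erf_strictMono (by exact mul_lt_mul_of_pos_right hxy hsa)
  have hφx := p.φ_pos hx
  have hφ := p.φ_mono hx hxy.le
  have hxy2 : x^2 ≤ y^2 := by nlinarith
  have hnum : Real.exp (-(y^2) * (p.α₁ / p.α₂)) ≤ Real.exp (-(x^2) * (p.α₁ / p.α₂)) := by
    apply Real.exp_le_exp.2
    nlinarith [mul_le_mul_of_nonneg_right hxy2 ha.le]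
  have hratio : Real.exp (-(y^2) * (p.α₁ / p.α₂)) / p.φ y
      ≤ Real.exp (-(x^2) * (p.α₁ / p.α₂)) / p.φ x :=
    div_le_div₀ (Real.exp_pos _).le hnum hφx hφ
  have hc : 0 ≤ p.Ste₂ / Real.sqrt Real.pi * (p.ℓ₂ / p.ℓ₁) *
      Real.sqrt (p.k₂ * p.c₁ / (p.k₁ * p.c₂)) := by
    have := p.hSte₂; have := sqrtPiPos; have := p.hℓ₁; have := p.hℓ₂
    positivity
  have := mul_le_mul_of_nonneg_left hratio hc
  linarith

lemma T_strictAnti (h₀ Ainf : ℝ) (hh : 0 < h₀) (hAB : p.B ≤ Ainf)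
    (hα : p.α₃ < p.α₂) {x y : ℝ} (hx : 0 ≤ x) (hxy : x < y) :
    p.T h₀ Ainf y < p.T h₀ Ainf x := by
  unfold T
  have ha : 0 < p.α₁ / p.α₂ := div_pos p.hα₁ p.hα₂
  have hb : 0 < p.α₁ * (1 / p.α₃ - 1 / p.α₂) := by
    apply mul_pos p.hα₁
    have h1 : 1 / p.α₂ < 1 / p.α₃ := one_div_lt_one_div_of_lt p.hα₃ hα
    linarith
  have hxy2 : x^2 ≤ y^2 := by nlinarith
  have hsa : 0 < Real.sqrt (p.α₁ / p.α₃) := Real.sqrt_pos.2 (div_pos p.hα₁ p.hα₃)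
  have hd : 0 < p.k₃ / (h₀ * Real.sqrt (Real.pi * p.α₃)) := by
    have : 0 < Real.sqrt (Real.pi * p.α₃) := Real.sqrt_pos.2 (mul_pos Real.pi_pos p.hα₃)
    exact div_pos p.hk₃ (mul_pos hh this)
  have hdenx : 0 < p.k₃ / (h₀ * Real.sqrt (Real.pi * p.α₃)) + erf (x * Real.sqrt (p.α₁ / p.α₃)) := by
    have := erf_nonneg' (mul_nonneg hx hsa.le); linarith
  have hden : p.k₃ / (h₀ * Real.sqrt (Real.pi * p.α₃)) + erf (x * Real.sqrt (p.α₁ / p.α₃))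
      ≤ p.k₃ / (h₀ * Real.sqrt (Real.pi * p.α₃)) + erf (y * Real.sqrt (p.α₁ / p.α₃)) := by
    have := (erf_strictMono (mul_lt_mul_of_pos_right hxy hsa)).le; linarith
  have hnum : Real.exp (-(y^2) * p.α₁ * (1 / p.α₃ - 1 / p.α₂))
      ≤ Real.exp (-(x^2) * p.α₁ * (1 / p.α₃ - 1 / p.α₂)) := by
    apply Real.exp_le_exp.2
    nlinarith [mul_le_mul_of_nonneg_right hxy2 hb.le]
  have hratio : Real.exp (-(y^2) * p.α₁ * (1 / p.α₃ - 1 / p.α₂)) /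
        (p.k₃ / (h₀ * Real.sqrt (Real.pi * p.α₃)) + erf (y * Real.sqrt (p.α₁ / p.α₃)))
      ≤ Real.exp (-(x^2) * p.α₁ * (1 / p.α₃ - 1 / p.α₂)) /
        (p.k₃ / (h₀ * Real.sqrt (Real.pi * p.α₃)) + erf (x * Real.sqrt (p.α₁ / p.α₃))) :=
    div_le_div₀ (Real.exp_pos _).le hnum hdenx hden
  have hc : 0 ≤ p.Ste₂ / (Real.sqrt Real.pi * p.c₂) * ((Ainf - p.B) / (p.B - p.C)) *
      Real.sqrt (p.k₃ * p.c₁ * p.c₃ / p.k₁) := by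
    have h1 : 0 < p.Ste₂ / (Real.sqrt Real.pi * p.c₂) :=
      div_pos p.hSte₂ (mul_pos sqrtPiPos p.hc₂)
    have h2 : 0 ≤ (Ainf - p.B) / (p.B - p.C) :=
      div_nonneg (by linarith) (by linarith [p.hBC])
    positivity
  have h1 := mul_le_mul_of_nonneg_left hratio hc
  have h2 : x * Real.exp (x^2 * (p.α₁ / p.α₂)) < y * Real.exp (y^2 * (p.α₁ / p.α₂)) := by
    calc x * Real.exp (x^2 * (p.α₁ / p.α₂))
        ≤ x * Real.exp (y^2 * (p.α₁ / p.α₂)) := by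
          apply mul_le_mul_of_nonneg_left _ hx
          exact Real.exp_le_exp.2 (mul_le_mul_of_nonneg_right hxy2 ha.le)
      _ < y * Real.exp (y^2 * (p.α₁ / p.α₂)) :=
          mul_lt_mul_of_pos_right hxy (Real.exp_pos _)
  linarith

end Params

set_option maxHeartbeats 1000000 in
/-- Equivalence Dirichlet → Robin. -/
theorem dirichlet_to_robin (p : Params) (A Ainf z₀ μ₁ μ₂ h₀ : ℝ)
    (hα : p.α₃ < p.α₂) (hA : p.B < A)
    (hz₀ : 0 < z₀ ∧ p.H z₀ = 0)
    (hμ₁ : z₀ < μ₁) (hμ₂ : 0 ≤ μ₂)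
    (herf : erf (μ₂ * Real.sqrt (p.α₁ / p.α₂)) = p.H μ₁)
    (hsys : p.Q μ₁ = p.V A μ₂)
    (hAinf : A < Ainf)
    (hcond : (A - p.B) / ((Ainf - A) * erf (μ₂ * Real.sqrt (p.α₁ / p.α₃))) >
      ((p.B - p.C) / (Ainf - p.B)) * Real.sqrt (p.k₂ * p.c₂ / (p.k₃ * p.c₃)) *
        (1 / erf (z₀ * Real.sqrt (p.α₁ / p.α₂))))
    (hh₀ : h₀ = (p.k₃ / Real.sqrt (p.α₃ * Real.pi)) *
      ((A - p.B) / ((Ainf - A) * erf (μ₂ * Real.sqrt (p.α₁ / p.α₃))))) :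
    p.h2 Ainf z₀ < h₀ ∧ p.Q μ₁ = p.T h₀ Ainf μ₂ ∧
    ∀ ξ₁ ξ₂ : ℝ, z₀ < ξ₁ → 0 ≤ ξ₂ →
      erf (ξ₂ * Real.sqrt (p.α₁ / p.α₂)) = p.H ξ₁ →
      p.Q ξ₁ = p.T h₀ Ainf ξ₂ → ξ₁ = μ₁ ∧ ξ₂ = μ₂ := by
  -- notation and basic positivity
  obtain ⟨hz₀pos, hHz₀⟩ := hz₀
  have hα₁ := p.hα₁; have hα₂ := p.hα₂; have hα₃ := p.hα₃
  have hsa₂ : 0 < Real.sqrt (p.α₁ / p.α₂) := Real.sqrt_pos.2 (div_pos hα₁ hα₂)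
  have hsa₃ : 0 < Real.sqrt (p.α₁ / p.α₃) := Real.sqrt_pos.2 (div_pos hα₁ hα₃)
  have herfz₀ : 0 < erf (z₀ * Real.sqrt (p.α₁ / p.α₂)) :=
    erf_pos' (mul_pos hz₀pos hsa₂)
  have hAinfB : p.B < Ainf := lt_trans hA hAinf
  have hRHSpos : 0 < ((p.B - p.C) / (Ainf - p.B)) * Real.sqrt (p.k₂ * p.c₂ / (p.k₃ * p.c₃)) *
      (1 / erf (z₀ * Real.sqrt (p.α₁ / p.α₂))) := by
    have h1 : 0 < (p.B - p.C) / (Ainf - p.B) := div_pos (by linarith [p.hBC]) (by linarith)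
    have h2 : 0 < Real.sqrt (p.k₂ * p.c₂ / (p.k₃ * p.c₃)) :=
      Real.sqrt_pos.2 (div_pos (mul_pos p.hk₂ p.hc₂) (mul_pos p.hk₃ p.hc₃))
    positivity
  -- μ₂ > 0
  have hμ₂pos : 0 < μ₂ := by
    rcases hμ₂.eq_or_lt with h | h
    · exfalso
      rw [← h] at hcond
      rw [one_div] at hRHSpos
      simp [erf_zero'] at hcond
      linarith
    · exact h
  have he₃ : 0 < erf (μ₂ * Real.sqrt (p.α₁ / p.α₃)) := erf_pos' (mul_pos hμ₂pos hsa₃)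
  have hL : 0 < (A - p.B) / ((Ainf - A) * erf (μ₂ * Real.sqrt (p.α₁ / p.α₃))) :=
    div_pos (by linarith) (mul_pos (by linarith) he₃)
  have hsπα₃ : 0 < Real.sqrt (p.α₃ * Real.pi) := Real.sqrt_pos.2 (mul_pos hα₃ Real.pi_pos)
  have hh₀pos : 0 < h₀ := by
    rw [hh₀]; exact mul_pos (div_pos p.hk₃ hsπα₃) hL
  -- Part 1 : h₂ < h₀
  have hpart1 : p.h2 Ainf z₀ < h₀ := by
    have hfac : 0 < p.k₃ / Real.sqrt (p.α₃ * Real.pi) := div_pos p.hk₃ hsπα₃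
    have hmul := mul_lt_mul_of_pos_left hcond hfac
    have hid : p.k₃ / Real.sqrt (p.α₃ * Real.pi) *
        (((p.B - p.C) / (Ainf - p.B)) * Real.sqrt (p.k₂ * p.c₂ / (p.k₃ * p.c₃)) *
          (1 / erf (z₀ * Real.sqrt (p.α₁ / p.α₂)))) = p.h2 Ainf z₀ := by
      unfold Params.h2
      have hk : Real.sqrt (p.k₂ * p.k₃ * p.c₂ / (Real.pi * p.c₃ * p.α₃))
          = p.k₃ / Real.sqrt (p.α₃ * Real.pi) * Real.sqrt (p.k₂ * p.c₂ / (p.k₃ * p.c₃)) := by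
        rw [show p.k₂ * p.k₃ * p.c₂ / (Real.pi * p.c₃ * p.α₃)
            = (p.k₃^2 / (p.α₃ * Real.pi)) * (p.k₂ * p.c₂ / (p.k₃ * p.c₃)) by
          field_simp [p.hk₃.ne', p.hc₃.ne', p.hα₃.ne', Real.pi_ne_zero]]
        rw [Real.sqrt_mul (by positivity), Real.sqrt_div (by positivity), Real.sqrt_sq p.hk₃.le]
      rw [hk]
      ring
    rw [hh₀, ← hid]
    linarith [hmul]
  -- T = V at μ₂
  have hTV : p.T h₀ Ainf μ₂ = p.V A μ₂ := by
    unfold Params.T Params.V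
    have hexp : Real.exp (-(μ₂^2) * p.α₁ * (1 / p.α₃ - 1 / p.α₂))
        = Real.exp (-(μ₂^2) * (p.α₁ / p.α₃ - p.α₁ / p.α₂)) := by
      congr 1; field_simp
    have hsq : Real.sqrt (p.k₃ * p.c₁ * p.c₃ / p.k₁)
        = Real.sqrt Real.pi * Real.sqrt (p.c₁ * p.c₃ * p.k₃ / (Real.pi * p.k₁)) := by
      rw [← Real.sqrt_mul Real.pi_pos.le]
      congr 1
      field_simp [p.hk₁.ne', Real.pi_ne_zero]
    have hSte : p.Ste₂ = p.c₂ * (p.B - p.C) / p.ℓ₂ := rfl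
    rw [hexp, hsq, hSte]
    set E := erf (μ₂ * Real.sqrt (p.α₁ / p.α₃)) with hE
    set X := Real.exp (-(μ₂^2) * (p.α₁ / p.α₃ - p.α₁ / p.α₂)) with hX
    set Y := Real.exp (μ₂^2 * (p.α₁ / p.α₂)) with hY
    set S := Real.sqrt (p.c₁ * p.c₃ * p.k₃ / (Real.pi * p.k₁)) with hS
    have hdd : p.k₃ / (h₀ * Real.sqrt (Real.pi * p.α₃)) = (Ainf - A) * E / (A - p.B) := by
      rw [hh₀, show Real.sqrt (Real.pi * p.α₃) = Real.sqrt (p.α₃ * Real.pi) by rw [mul_comm]]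
      have hne1 : A - p.B ≠ 0 := by linarith
      have hne2 : Ainf - A ≠ 0 := by linarith
      have hne3 : E ≠ 0 := he₃.ne'
      have hne4 : Real.sqrt (p.α₃ * Real.pi) ≠ 0 := hsπα₃.ne'
      have hne5 : p.k₃ ≠ 0 := p.hk₃.ne'
      field_simp
    rw [hdd]
    have hne1 : A - p.B ≠ 0 := by linarith
    have hne2 : (p.B : ℝ) - p.C ≠ 0 := by linarith [p.hBC]
    have hne3 : E ≠ 0 := he₃.ne'
    have hne4 : Real.sqrt Real.pi ≠ 0 := sqrtPiPos.ne'
    have hne5 : p.c₂ ≠ 0 := p.hc₂.ne'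
    have hne6 : p.ℓ₂ ≠ 0 := p.hℓ₂.ne'
    have hne7 : Ainf - p.B ≠ 0 := by linarith
    have hden : (Ainf - A) * E / (A - p.B) + E = E * (Ainf - p.B) / (A - p.B) := by
      field_simp
      ring
    rw [hden]
    field_simp
  have hQT : p.Q μ₁ = p.T h₀ Ainf μ₂ := by rw [hsys, ← hTV]
  refine ⟨hpart1, hQT, ?_⟩
  -- Part 3 : uniqueness
  intro ξ₁ ξ₂ hξ₁ hξ₂ herfξ hsysξ
  have hx₁ : (0:ℝ) ≤ ξ₁ := by linarith
  have hm₁ : (0:ℝ) ≤ μ₁ := by linarith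
  have hkey : ξ₁ = μ₁ := by
    rcases lt_trichotomy ξ₁ μ₁ with h | h | h
    · exfalso
      have hH := p.H_strictMono hx₁ h
      rw [← herfξ, ← herf] at hH
      have hξμ : ξ₂ < μ₂ := by
        by_contra hcon
        push_neg at hcon
        rcases hcon.eq_or_lt with he | hlt
        · rw [he] at hH; exact lt_irrefl _ hH
        · exact absurd (erf_strictMono (mul_lt_mul_of_pos_right hlt hsa₂)) (by linarith)
      have hQ := p.Q_strictMono hx₁ h
      have hT := p.T_strictAnti h₀ Ainf hh₀pos hAinfB.le hα hξ₂ hξμ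
      rw [hsysξ, hQT] at hQ
      linarith
    · exact h
    · exfalso
      have hH := p.H_strictMono hm₁ h
      rw [← herfξ, ← herf] at hH
      have hξμ : μ₂ < ξ₂ := by
        by_contra hcon
        push_neg at hcon
        rcases hcon.eq_or_lt with he | hlt
        · rw [← he] at hH; exact lt_irrefl _ hH
        · exact absurd (erf_strictMono (mul_lt_mul_of_pos_right hlt hsa₂)) (by linarith)
      have hQ := p.Q_strictMono hm₁ h
      have hT := p.T_strictAnti h₀ Ainf hh₀pos hAinfB.le hα hμ₂ hξμ
      rw [hsysξ, hQT] at hQ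
      linarith
  refine ⟨hkey, ?_⟩
  rw [hkey] at herfξ
  have heq : erf (ξ₂ * Real.sqrt (p.α₁ / p.α₂)) = erf (μ₂ * Real.sqrt (p.α₁ / p.α₂)) := by
    rw [herfξ, herf]
  have := erf_strictMono.injective heq
  exact mul_right_cancel₀ hsa₂.ne' this
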